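/- Let G be a finite simple graph on a vertex set W with |W| = N, let m ≥ 1 be an integer, and let s be an integer with N ≤ 2s. Then G admits a replicated bipartition with bound s of cost 0 if and only if the m-blowup of G admits a replicated bipartition with bound s·m of cost 0. -/

import Mathlib

open Finset

/-- The cost of a (possibly replicated) bipartition `(V1, V2)` of the vertex set of a simple
graph `G`: the number of edges of `G` having one endpoint in `V1 \ V2` and the other in
`V2 \ V1`. -/
def repCost {V : Type*} [Fintype V] [DecidableEq V] (G : SimpleGraph V) [DecidableRel G.Adj]
    (V1 V2 : Finset V) : ℕ :=
  (G.edgeFinset.filter (fun e => ∃ a ∈ V1 \ V2, ∃ b ∈ V2 \ V1, e = s(a, b))).card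

/-- The `m`-blowup of a simple graph `G` on `W`: the graph on `W × Fin m` where `(u, i)` and
`(v, j)` are adjacent iff either `u = v` and `i ≠ j`, or `u` and `v` are adjacent in `G`. -/
def blowup {W : Type*} (G : SimpleGraph W) (m : ℕ) : SimpleGraph (W × Fin m) where
  Adj x y := (x.1 = y.1 ∧ x.2 ≠ y.2) ∨ G.Adj x.1 y.1
  symm := by
    constructor
    intro x y h
    rcases h with ⟨h1, h2⟩ | h
    · exact Or.inl ⟨h1.symm, h2.symm⟩
    · exact Or.inr h.symm
  loopless := by
    constructor
    intro x h
    rcases h with ⟨_, h2⟩ | h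
    · exact h2 rfl
    · exact G.loopless.irrefl _ h

instance {W : Type*} [DecidableEq W] (G : SimpleGraph W) [DecidableRel G.Adj] (m : ℕ) :
    DecidableRel (blowup G m).Adj :=
  fun x y => inferInstanceAs (Decidable ((x.1 = y.1 ∧ x.2 ≠ y.2) ∨ G.Adj x.1 y.1))

lemma repCost_eq_zero_iff {V : Type*} [Fintype V] [DecidableEq V] (G : SimpleGraph V)
    [DecidableRel G.Adj] (V1 V2 : Finset V) :
    repCost G V1 V2 = 0 ↔ ∀ a ∈ V1 \ V2, ∀ b ∈ V2 \ V1, ¬ G.Adj a b := by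
  rw [repCost, Finset.card_eq_zero, Finset.filter_eq_empty_iff]
  constructor
  · intro h a ha b hb hadj
    exact h (SimpleGraph.mem_edgeFinset.2 ((G.mem_edgeSet).2 hadj)) ⟨a, ha, b, hb, rfl⟩
  · rintro h e he ⟨a, ha, b, hb, rfl⟩
    exact h a ha b hb ((G.mem_edgeSet).1 (SimpleGraph.mem_edgeFinset.1 he))

/-- Let `G` be a finite simple graph on a vertex set `W` with `|W| = N`, let
`m ≥ 1` be an integer, and let `s` be an integer with `N ≤ 2s`. Then `G` admits a replicated
bipartition with bound `s` of cost `0` if and only if the `m`-blowup of `G` admits a replicated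
bipartition with bound `s·m` of cost `0`. -/
theorem stmt5 {W : Type*} [Fintype W] [DecidableEq W]
    (G : SimpleGraph W) [DecidableRel G.Adj]
    (N m s : ℕ) (hN : Fintype.card W = N) (hm : 1 ≤ m) (hs : N ≤ 2 * s) :
    (∃ V1 V2 : Finset W, V1 ∪ V2 = Finset.univ ∧
      V1.card ≤ s ∧ V2.card ≤ s ∧ repCost G V1 V2 = 0) ↔
    (∃ V1 V2 : Finset (W × Fin m), V1 ∪ V2 = Finset.univ ∧
      V1.card ≤ s * m ∧ V2.card ≤ s * m ∧ repCost (blowup G m) V1 V2 = 0) := by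
  have hmpos : 0 < m := hm
  constructor
  · rintro ⟨V1, V2, hU, h1, h2, hc⟩
    refine ⟨V1 ×ˢ Finset.univ, V2 ×ˢ Finset.univ, ?_, ?_, ?_, ?_⟩
    · rw [← Finset.union_product, hU, Finset.univ_product_univ]
    · simpa [Finset.card_product] using Nat.mul_le_mul_right m h1
    · simpa [Finset.card_product] using Nat.mul_le_mul_right m h2
    · rw [repCost_eq_zero_iff] at hc ⊢
      rintro ⟨a, i⟩ ha ⟨b, j⟩ hb hadj
      simp only [Finset.mem_sdiff, Finset.mem_product, Finset.mem_univ, and_true] at ha hb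
      have ha' : a ∈ V1 \ V2 := Finset.mem_sdiff.2 ⟨ha.1, fun h => ha.2 h⟩
      have hb' : b ∈ V2 \ V1 := Finset.mem_sdiff.2 ⟨hb.1, fun h => hb.2 h⟩
      rcases hadj with ⟨h1', _⟩ | h
      · have h1'' : a = b := h1'
        exact (Finset.mem_sdiff.1 hb').2 (h1'' ▸ (Finset.mem_sdiff.1 ha').1)
      · exact hc a ha' b hb' h
  · rintro ⟨V1, V2, hU, h1, h2, hc⟩
    rw [repCost_eq_zero_iff] at hc
    set U1 : Finset W := Finset.univ.filter (fun u => ∀ i, (u, i) ∈ V1) with hU1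
    set U2 : Finset W := Finset.univ.filter (fun u => ∀ i, (u, i) ∈ V2) with hU2
    have hmemU1 : ∀ u, u ∈ U1 ↔ ∀ i, (u, i) ∈ V1 := by
      intro u; simp [hU1]
    have hmemU2 : ∀ u, u ∈ U2 ↔ ∀ i, (u, i) ∈ V2 := by
      intro u; simp [hU2]
    have hmemV : ∀ x : W × Fin m, x ∈ V1 ∪ V2 := by
      intro x; rw [hU]; exact Finset.mem_univ x
    refine ⟨U1, U2, ?_, ?_, ?_, ?_⟩
    · apply Finset.eq_univ_of_forall
      intro u
      by_contra hcon
      simp only [Finset.mem_union, hmemU1, hmemU2, not_or, not_forall] at hcon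
      obtain ⟨⟨i, hi⟩, ⟨j, hj⟩⟩ := hcon
      have hi' : (u, i) ∈ V2 \ V1 :=
        Finset.mem_sdiff.2 ⟨(Finset.mem_union.1 (hmemV (u, i))).resolve_left hi, hi⟩
      have hj' : (u, j) ∈ V1 \ V2 :=
        Finset.mem_sdiff.2 ⟨(Finset.mem_union.1 (hmemV (u, j))).resolve_right hj, hj⟩
      have hij : j ≠ i := by
        rintro rfl
        exact hi ((Finset.mem_sdiff.1 hj').1)
      exact hc (u, j) hj' (u, i) hi' (Or.inl ⟨rfl, hij⟩)
    · have hsub : U1 ×ˢ (Finset.univ : Finset (Fin m)) ⊆ V1 := by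
        rintro ⟨u, i⟩ hx
        exact (hmemU1 u).1 (Finset.mem_product.1 hx).1 i
      have := Finset.card_le_card hsub
      rw [Finset.card_product, Finset.card_univ, Fintype.card_fin] at this
      exact Nat.le_of_mul_le_mul_right (this.trans h1) hmpos
    · have hsub : U2 ×ˢ (Finset.univ : Finset (Fin m)) ⊆ V2 := by
        rintro ⟨u, i⟩ hx
        exact (hmemU2 u).1 (Finset.mem_product.1 hx).1 i
      have := Finset.card_le_card hsub
      rw [Finset.card_product, Finset.card_univ, Fintype.card_fin] at this
      exact Nat.le_of_mul_le_mul_right (this.trans h2) hmpos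
    · rw [repCost_eq_zero_iff]
      intro a ha b hb hadj
      obtain ⟨ha1, ha2⟩ := Finset.mem_sdiff.1 ha
      obtain ⟨hb1, hb2⟩ := Finset.mem_sdiff.1 hb
      rw [hmemU2] at ha2; rw [hmemU1] at hb2
      push_neg at ha2 hb2
      obtain ⟨j, hj⟩ := ha2
      obtain ⟨i, hi⟩ := hb2
      have haj : (a, j) ∈ V1 \ V2 := Finset.mem_sdiff.2 ⟨(hmemU1 a).1 ha1 j, hj⟩
      have hbi : (b, i) ∈ V2 \ V1 := Finset.mem_sdiff.2 ⟨(hmemU2 b).1 hb1 i, hi⟩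
      exact hc (a, j) haj (b, i) hbi (Or.inr hadj)
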